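/- Let F : C ⥤ X be a faithful essential localization, and assume that every pullback stable essential monomorphism in X is an isomorphism. Then F is a localization functor (in the sense of categories of fractions) of C with respect to the class W of pullback stable essential monomorphisms of C; that is, F inverts exactly the morphisms of W and exhibits X as the category of fractions C[W⁻¹] (the spectral category Spec(C)). In particular, Spec(C) is equivalent to X. -/

import Mathlib

open CategoryTheory Limits

/-- A morphism `m` is an essential monomorphism if it is a monomorphism and every
morphism `f` such that `m ≫ f` is a monomorphism is itself a monomorphism. -/
def IsEssentialMono {C : Type*} [CategoryTheory.Category C] {S A : C} (m : S ⟶ A) : Prop :=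
  CategoryTheory.Mono m ∧
    ∀ ⦃B : C⦄ (f : A ⟶ B), CategoryTheory.Mono (m ≫ f) → CategoryTheory.Mono f

/-- A morphism `m : S ⟶ A` is a pullback stable essential monomorphism if for every
morphism `u : X ⟶ A` the pullback projection `S ×_A X ⟶ X` of `m` along `u` is an
essential monomorphism. -/
def IsStableEssentialMono {C : Type*} [CategoryTheory.Category C]
    [CategoryTheory.Limits.HasPullbacks C] {S A : C} (m : S ⟶ A) : Prop :=
  ∀ ⦃X : C⦄ (u : X ⟶ A), IsEssentialMono (CategoryTheory.Limits.pullback.snd m u)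

/-- The class of pullback stable essential monomorphisms, as a `MorphismProperty`. -/
def stableEssentialMonos (C : Type*) [Category C] [HasPullbacks C] :
    CategoryTheory.MorphismProperty C :=
  fun _ _ m => IsStableEssentialMono m

section AuxEss

variable {C : Type*} [Category C]

lemma essMono_of_isIso {A B : C} (e : A ⟶ B) [IsIso e] : IsEssentialMono e := by
  refine ⟨inferInstance, ?_⟩
  intro Z f hf
  have h : f = inv e ≫ (e ≫ f) := by simp
  rw [h]
  haveI := hf
  exact mono_comp _ _

lemma IsEssentialMono.comp {A B D : C} {u : A ⟶ B} {v : B ⟶ D}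
    (hu : IsEssentialMono u) (hv : IsEssentialMono v) : IsEssentialMono (u ≫ v) := by
  haveI := hu.1; haveI := hv.1
  refine ⟨mono_comp _ _, ?_⟩
  intro Z f hf
  rw [Category.assoc] at hf
  exact hv.2 f (hu.2 (v ≫ f) hf)

lemma IsEssentialMono.cancel {A B D : C} {u : A ⟶ B} {v : B ⟶ D}
    (hu : IsEssentialMono u) (huv : IsEssentialMono (u ≫ v)) : IsEssentialMono v := by
  have hv1 : Mono v := hu.2 v huv.1
  refine ⟨hv1, ?_⟩
  intro Z f hf
  haveI := hu.1; haveI := hf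
  have h : Mono ((u ≫ v) ≫ f) := by rw [Category.assoc]; exact mono_comp _ _
  exact huv.2 f h

end AuxEss

section AuxStable

variable {C : Type*} [Category C] [HasPullbacks C]

lemma stable_comp {S M A : C} {a : S ⟶ M} {b : M ⟶ A}
    (ha : IsStableEssentialMono a) (hb : IsStableEssentialMono b) :
    IsStableEssentialMono (a ≫ b) := by
  intro Z u
  have h : (pullbackRightPullbackFstIso b u a).inv ≫
      pullback.snd a (pullback.fst b u) ≫ pullback.snd b u = pullback.snd (a ≫ b) u :=
    pullbackRightPullbackFstIso_inv_snd_snd b u a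
  rw [← h]
  exact (essMono_of_isIso _).comp ((ha _).comp (hb u))

lemma stable_cancel {S M A : C} {a : S ⟶ M} {b : M ⟶ A}
    (ha : IsStableEssentialMono a) (hab : IsStableEssentialMono (a ≫ b)) :
    IsStableEssentialMono b := by
  intro Z u
  have h2 : IsEssentialMono (pullback.snd a (pullback.fst b u) ≫ pullback.snd b u) := by
    rw [← pullbackRightPullbackFstIso_hom_snd b u a]
    exact (essMono_of_isIso _).comp (hab u)
  exact (ha _).cancel h2

end AuxStable

section AuxFunctor

variable {C : Type*} [Category C] {D : Type*} [Category D]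
  [HasPullbacks C] [HasPullbacks D]

/-- If a faithful pullback-preserving functor inverts `m`, then `m` is a pullback stable
essential monomorphism. -/
lemma stable_of_isIso_map (F : C ⥤ D) [F.Faithful]
    [PreservesLimitsOfShape WalkingCospan F]
    {S A : C} (m : S ⟶ A) (hm : IsIso (F.map m)) : IsStableEssentialMono m := by
  intro Z u
  haveI := hm
  have hFp : IsIso (F.map (pullback.snd m u)) := by
    rw [← PreservesPullback.iso_hom_snd F m u]
    infer_instance
  have hpmono : Mono (pullback.snd m u) := by
    haveI := hFp
    exact F.mono_of_mono_map inferInstance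
  refine ⟨hpmono, ?_⟩
  intro B f hf
  haveI := hf
  have h1 : Mono (F.map (pullback.snd m u) ≫ F.map f) := by
    rw [← F.map_comp]; exact F.map_mono _
  have h2 : Mono (F.map f) := by
    have e : F.map f = inv (F.map (pullback.snd m u)) ≫
        (F.map (pullback.snd m u) ≫ F.map f) := by simp
    rw [e]
    haveI := h1
    exact mono_comp _ _
  exact F.mono_of_mono_map h2

/-- A faithful pullback-preserving functor reflects pullback stable essential monos. -/
lemma stable_of_map_stable (G : D ⥤ C) [G.Faithful]
    [PreservesLimitsOfShape WalkingCospan G]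
    {S A : D} (n : S ⟶ A) (h : IsStableEssentialMono (G.map n)) :
    IsStableEssentialMono n := by
  intro Z u
  have hGmap : G.map (pullback.snd n u) =
      (PreservesPullback.iso G n u).hom ≫ pullback.snd (G.map n) (G.map u) :=
    (PreservesPullback.iso_hom_snd G n u).symm
  have hmono : Mono (pullback.snd n u) := by
    haveI := (h (G.map u)).1
    refine G.mono_of_mono_map ?_
    rw [hGmap]
    exact mono_comp _ _
  refine ⟨hmono, ?_⟩
  intro B f hf
  haveI := hf
  have e : pullback.snd (G.map n) (G.map u) ≫ G.map f
      = (PreservesPullback.iso G n u).inv ≫ G.map (pullback.snd n u ≫ f) := by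
    rw [G.map_comp, hGmap]
    simp
  have hm : Mono (pullback.snd (G.map n) (G.map u) ≫ G.map f) := by
    rw [e]
    haveI : Mono (G.map (pullback.snd n u ≫ f)) := G.map_mono _
    exact mono_comp _ _
  exact G.mono_of_mono_map ((h (G.map u)).2 (G.map f) hm)

end AuxFunctor

/-- Let `F : C ⥤ X` be a faithful essential localization such that every pullback stable
essential monomorphism in `X` is an isomorphism. Then `F` inverts exactly the pullback
stable essential monomorphisms of `C`, and `F` exhibits `X` as the category of fractions
of `C` with respect to this class, i.e. as the spectral category `Spec(C)`; in particular
`Spec(C)` is equivalent to `X`. -/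
theorem isLocalization_stableEssentialMonos
    {C : Type*} [Category C] {X : Type*} [Category X]
    [HasFiniteLimits C] [HasFiniteLimits X]
    (F : C ⥤ X) (G : X ⥤ C) (H : X ⥤ C)
    (adj : F ⊣ G) [PreservesFiniteLimits F] [F.Faithful] [G.Full] [G.Faithful]
    (adj' : H ⊣ F)
    (hX : ∀ ⦃S A : X⦄ (n : S ⟶ A), IsStableEssentialMono n → IsIso n) :
    (∀ ⦃S A : C⦄ (m : S ⟶ A), stableEssentialMonos C m ↔ IsIso (F.map m)) ∧
      F.IsLocalization (stableEssentialMonos C) := by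
  haveI : PreservesLimitsOfSize.{0,0} G := adj.rightAdjoint_preservesLimits
  have unit_stable : ∀ (A : C), IsStableEssentialMono (adj.unit.app A) := by
    intro A
    refine stable_of_isIso_map F _ ?_
    have h := adj.left_triangle_components A
    have e : F.map (adj.unit.app A) = inv (adj.counit.app (F.obj A)) := by
      rw [← cancel_mono (adj.counit.app (F.obj A)), h, IsIso.inv_hom_id]
      rfl
    rw [e]
    infer_instance
  have forward : ∀ ⦃S A : C⦄ (m : S ⟶ A), stableEssentialMonos C m → IsIso (F.map m) := by
    intro S A m hm
    have hcomp : IsStableEssentialMono (m ≫ adj.unit.app A) := stable_comp hm (unit_stable A)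
    have hnat : m ≫ adj.unit.app A = adj.unit.app S ≫ G.map (F.map m) := by
      exact adj.unit.naturality m
    rw [hnat] at hcomp
    exact hX _ (stable_of_map_stable G _ (stable_cancel (unit_stable S) hcomp))
  have backward : ∀ ⦃S A : C⦄ (m : S ⟶ A), IsIso (F.map m) → stableEssentialMonos C m :=
    fun S A m h => stable_of_isIso_map F m h
  refine ⟨fun S A m => ⟨forward m, backward m⟩, ?_⟩
  have heq : stableEssentialMonos C = (MorphismProperty.isomorphisms X).inverseImage F := by
    funext S A m
    exact propext ⟨fun h => forward m h, fun h => backward m h⟩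
  rw [heq]
  exact adj.isLocalization
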